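/- If v ≈^t_k w, then for every word u, uv ≈^t_k uw or uv ≈^t_k uw^r. -/

import Mathlib

/-- Number of occurrences of `v` or `v.reverse` in `w`. -/
def occR {A : Type*} [DecidableEq A] (w v : List A) : ℕ :=
  (List.range (w.length + 1)).countP
    (fun i => decide ((w.drop i).take v.length = v ∨ (w.drop i).take v.length = v.reverse))

/-- Equality up to threshold `t`. -/
def thrEq (t i j : ℕ) : Prop := i = j ∨ (t ≤ i ∧ t ≤ j)

/-- The `(k,t)`-locally-reversible threshold testable equivalence. -/
def LRTT {A : Type*} [DecidableEq A] (k t : ℕ) (w w' : List A) : Prop :=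
  (w.length < k ∧ (w' = w ∨ w' = w.reverse)) ∨
  (k ≤ w.length ∧ k ≤ w'.length ∧
    (∀ v : List A, v.length ≤ k → thrEq t (occR w v) (occR w' v)) ∧
    ({w.take (k - 1), (w.drop (w.length - (k - 1))).reverse} : Set (List A)) =
      {w'.take (k - 1), (w'.drop (w'.length - (k - 1))).reverse})

lemma thrEq_add {t i j : ℕ} (c : ℕ) (h : thrEq t i j) : thrEq t (c + i) (c + j) := by
  unfold thrEq at *; omega

lemma window_take {A : Type*} (l : List A) {i n m : ℕ} (h : i + n ≤ m) :
    ((l.take m).drop i).take n = (l.drop i).take n := by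
  rw [List.drop_take, List.take_take]
  congr 1; omega

lemma rev_window {A : Type*} (w : List A) {i n : ℕ} (h : i + n ≤ w.length) :
    (w.reverse.drop i).take n = ((w.drop (w.length - n - i)).take n).reverse := by
  have hm : (w.length - i) ⊓ w.length - n = w.length - n - i := by omega
  have hn : (w.length - i) - (w.length - n - i) = n := by omega
  rw [List.drop_reverse, List.take_reverse, List.length_take, List.drop_take, hm, hn]

lemma countP_range_eq_card {n : ℕ} (p : ℕ → Bool) :
    (List.range n).countP p = ((Finset.range n).filter (fun i => p i)).card := by
  simp [Finset.card_filter, Finset.range, Multiset.range, List.countP_eq_length_filter,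
    Finset.filter, Multiset.filter_coe]

lemma occR_reverse {A : Type*} [DecidableEq A] (w x : List A) :
    occR w.reverse x = occR w x := by
  unfold occR
  rw [countP_range_eq_card, countP_range_eq_card, List.length_reverse]
  -- bound : any counted window has i + x.length ≤ w.length
  have hbound : ∀ (y : List A) (i : ℕ), i < w.length + 1 →
      ((y.drop i).take x.length = x ∨ (y.drop i).take x.length = x.reverse) →
      y.length = w.length → i + x.length ≤ w.length := by
    intro y i hi hp hy
    by_contra hc
    rcases hp with hp | hp <;>
      · have h := congrArg List.length hp
        simp [List.length_take, List.length_drop] at h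
        omega
  apply Finset.card_nbij' (fun i => w.length - x.length - i) (fun i => w.length - x.length - i)
  · intro a ha
    simp only [Finset.mem_coe, Finset.mem_filter, Finset.mem_range, decide_eq_true_eq] at ha ⊢
    obtain ⟨ha1, ha2⟩ := ha
    have hb := hbound w.reverse a ha1 ha2 (by simp)
    constructor
    · omega
    · rw [rev_window w hb] at ha2
      rcases ha2 with h | h
      · right
        simpa using congrArg List.reverse h
      · left
        simpa using congrArg List.reverse h
  · intro a ha
    simp only [Finset.mem_coe, Finset.mem_filter, Finset.mem_range, decide_eq_true_eq] at ha ⊢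
    obtain ⟨ha1, ha2⟩ := ha
    have hb := hbound w a ha1 ha2 rfl
    constructor
    · omega
    · rw [rev_window w (by omega : (w.length - x.length - a) + x.length ≤ w.length)]
      have : w.length - x.length - (w.length - x.length - a) = a := by omega
      rw [this]
      rcases ha2 with h | h
      · right; rw [h]
      · left; rw [h, List.reverse_reverse]
  · intro a ha
    simp only [Finset.mem_coe, Finset.mem_filter, Finset.mem_range, decide_eq_true_eq] at ha
    have hb := hbound w.reverse a ha.1 ha.2 (by simp)
    beta_reduce
    omega
  · intro a ha
    simp only [Finset.mem_coe, Finset.mem_filter, Finset.mem_range, decide_eq_true_eq] at ha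
    have hb := hbound w a ha.1 ha.2 rfl
    beta_reduce
    omega

lemma occR_append {A : Type*} [DecidableEq A] (u v x : List A) :
    occR (u ++ v) x =
      (List.range u.length).countP
        (fun i => decide (((u ++ v).drop i).take x.length = x ∨
          ((u ++ v).drop i).take x.length = x.reverse)) + occR v x := by
  unfold occR
  have hlen : (u ++ v).length + 1 = u.length + (v.length + 1) := by simp; omega
  rw [hlen, List.range_add, List.countP_append, List.countP_map]
  congr 1
  apply List.countP_congr
  intro i _
  simp only [Function.comp_apply, decide_eq_true_eq]
  rw [List.drop_length_add_append]

lemma prefix_count_eq {A : Type*} [DecidableEq A] (k : ℕ) (hk : 0 < k) (u v w x : List A)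
    (hv : k ≤ v.length) (hw : k ≤ w.length) (hx : x.length ≤ k)
    (hpre : v.take (k - 1) = w.take (k - 1)) :
    (List.range u.length).countP
        (fun i => decide (((u ++ v).drop i).take x.length = x ∨
          ((u ++ v).drop i).take x.length = x.reverse)) =
    (List.range u.length).countP
        (fun i => decide (((u ++ w).drop i).take x.length = x ∨
          ((u ++ w).drop i).take x.length = x.reverse)) := by
  apply List.countP_congr
  intro i hi
  rw [List.mem_range] at hi
  have key : ((u ++ v).drop i).take x.length = ((u ++ w).drop i).take x.length := by
    have h1 : i + x.length ≤ u.length + (k - 1) := by omega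
    have hm : u.length + (k - 1) - u.length = k - 1 := by omega
    rw [← window_take (u ++ v) h1, ← window_take (u ++ w) h1,
      List.take_append, List.take_append, hm, hpre]
  simp only [decide_eq_true_eq, key]

lemma lrtt_refl {A : Type*} [DecidableEq A] (k t : ℕ) (w : List A) : LRTT k t w w := by
  rcases lt_or_ge w.length k with h | h
  · exact Or.inl ⟨h, Or.inl rfl⟩
  · exact Or.inr ⟨h, h, fun v _ => Or.inl rfl, rfl⟩

lemma lrtt_main {A : Type*} [DecidableEq A] (k t : ℕ) (hk : 0 < k) (u v w : List A)
    (hv : k ≤ v.length) (hw : k ≤ w.length)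
    (hocc : ∀ x : List A, x.length ≤ k → thrEq t (occR v x) (occR w x))
    (hpre : v.take (k - 1) = w.take (k - 1))
    (hsuf : (v.drop (v.length - (k - 1))).reverse = (w.drop (w.length - (k - 1))).reverse) :
    LRTT k t (u ++ v) (u ++ w) := by
  right
  have hv' : k ≤ (u ++ v).length := by simp; omega
  have hw' : k ≤ (u ++ w).length := by simp; omega
  refine ⟨hv', hw', ?_, ?_⟩
  · intro x hx
    rw [occR_append, occR_append, prefix_count_eq k hk u v w x hv hw hx hpre]
    exact thrEq_add _ (hocc x hx)
  · have hp : (u ++ v).take (k - 1) = (u ++ w).take (k - 1) := by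
      rw [List.take_append, List.take_append]
      congr 1
      have h1 : v.take (k - 1 - u.length) = (v.take (k - 1)).take (k - 1 - u.length) := by
        rw [List.take_take]; congr 1; omega
      have h2 : w.take (k - 1 - u.length) = (w.take (k - 1)).take (k - 1 - u.length) := by
        rw [List.take_take]; congr 1; omega
      rw [h1, h2, hpre]
    have hs : (u ++ v).drop ((u ++ v).length - (k - 1)) = v.drop (v.length - (k - 1)) := by
      have : (u ++ v).length - (k - 1) = u.length + (v.length - (k - 1)) := by simp; omega
      rw [this, List.drop_length_add_append]
    have hs' : (u ++ w).drop ((u ++ w).length - (k - 1)) = w.drop (w.length - (k - 1)) := by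
      have : (u ++ w).length - (k - 1) = u.length + (w.length - (k - 1)) := by simp; omega
      rw [this, List.drop_length_add_append]
    rw [hp, hs, hs', hsuf]

theorem lrtt_left_mul {A : Type*} [DecidableEq A] (k t : ℕ) (hk : 0 < k) (ht : 0 < t)
    (v w : List A) (hvw : LRTT k t v w) (u : List A) :
    LRTT k t (u ++ v) (u ++ w) ∨ LRTT k t (u ++ v) (u ++ w.reverse) := by
  rcases hvw with ⟨_, hw | hw⟩ | ⟨hv, hw, hocc, hset⟩
  · left; rw [hw]; exact lrtt_refl k t (u ++ v)
  · right; rw [hw, List.reverse_reverse]; exact lrtt_refl k t (u ++ v)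
  · rw [Set.pair_eq_pair_iff] at hset
    rcases hset with ⟨h1, h2⟩ | ⟨h1, h2⟩
    · left
      apply lrtt_main k t hk u v w hv hw hocc h1 h2
    · right
      have hwr : k ≤ w.reverse.length := by simpa using hw
      apply lrtt_main k t hk u v w.reverse hv hwr
      · intro x hx
        rw [occR_reverse]
        exact hocc x hx
      · rw [List.take_reverse]
        exact h1
      · rw [List.length_reverse, List.drop_reverse, List.reverse_reverse]
        have h3 : w.length - (w.length - (k - 1)) = k - 1 := by omega
        rw [h3]
        exact h2
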